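/- arXiv:2101.08083 — 4 statements merged into one kernel-verified Lean document; each statement's English description precedes it below -/
import Mathlib

section
/- For any cost function val : 𝒫({1,…,d}) → ℝ, the Shapley values φ_j(val) = (1/d) Σ_{A ⊆ {1,…,d}∖{j}} C(d−1,|A|)⁻¹ (val(A∪{j}) − val(A)) satisfy the efficiency property: Σ_{j=1}^{d} φ_j(val) = val({1,…,d}) − val(∅). -/
open Finset

/-- Efficiency property of the Shapley values: for any cost function `val` on subsets of
`{1,…,d}`, the Shapley values sum to `val {1,…,d} − val ∅`. -/
theorem shapley_efficiency {d : ℕ} (val : Finset (Fin d) → ℝ) :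
    ∑ j : Fin d, (1 / (d : ℝ)) *
      ∑ A ∈ (Finset.univ.erase j).powerset,
        (((d - 1).choose A.card : ℝ))⁻¹ * (val (insert j A) - val A)
      = val Finset.univ - val ∅ := by
  rcases Nat.eq_zero_or_pos d with hd | hd
  · subst hd
    simp [Finset.eq_empty_of_isEmpty (univ : Finset (Fin 0))]
  have hdR : (d : ℝ) ≠ 0 := Nat.cast_ne_zero.mpr hd.ne'
  set w : ℕ → ℝ := fun k => (((d - 1).choose k : ℝ))⁻¹ with hw
  rw [← Finset.mul_sum]
  have swap : ∑ j : Fin d, ∑ A ∈ (univ.erase j).powerset,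
      (w A.card * (val (insert j A) - val A))
      = ∑ A ∈ (univ : Finset (Fin d)).powerset, ∑ j ∈ univ \ A,
        (w A.card * (val (insert j A) - val A)) := by
    apply Finset.sum_comm'
    intro j A
    simp [Finset.subset_erase, and_comm]
  rw [swap]
  have split : ∀ A : Finset (Fin d), ∀ j ∈ univ \ A,
      w A.card * (val (insert j A) - val A)
        = w A.card * val (insert j A) - w A.card * val A := fun A j _ => mul_sub _ _ _
  have : ∑ A ∈ (univ : Finset (Fin d)).powerset, ∑ j ∈ univ \ A,
        (w A.card * (val (insert j A) - val A))
      = (∑ A ∈ (univ : Finset (Fin d)).powerset, ∑ j ∈ univ \ A, w A.card * val (insert j A))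
        - ∑ A ∈ (univ : Finset (Fin d)).powerset, ∑ j ∈ univ \ A, w A.card * val A := by
    rw [← Finset.sum_sub_distrib]
    exact Finset.sum_congr rfl fun A _ => by
      rw [← Finset.sum_sub_distrib]
      exact Finset.sum_congr rfl (split A)
  rw [this]
  have key : (∑ A ∈ (univ : Finset (Fin d)).powerset, ∑ j ∈ univ \ A, w A.card * val (insert j A))
      = ∑ B ∈ (univ : Finset (Fin d)).powerset, ∑ _j ∈ B, w (B.card - 1) * val B := by
    rw [Finset.sum_sigma', Finset.sum_sigma']
    apply Finset.sum_nbij' (fun p => (⟨insert p.2 p.1, p.2⟩ : Σ _B : Finset (Fin d), Fin d))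
      (fun p => (⟨p.1.erase p.2, p.2⟩ : Σ _A : Finset (Fin d), Fin d))
    · rintro ⟨A, j⟩ hp
      simp only [Finset.mem_sigma, Finset.mem_powerset, Finset.mem_sdiff] at hp ⊢
      exact ⟨Finset.subset_univ _, Finset.mem_insert_self _ _⟩
    · rintro ⟨B, j⟩ hp
      simp only [Finset.mem_sigma, Finset.mem_powerset, Finset.mem_sdiff] at hp ⊢
      exact ⟨Finset.subset_univ _, Finset.mem_univ _, Finset.notMem_erase _ _⟩
    · rintro ⟨A, j⟩ hp
      simp only [Finset.mem_sigma, Finset.mem_powerset, Finset.mem_sdiff] at hp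
      simp [Finset.erase_insert_of_ne, Finset.erase_insert hp.2.2]
    · rintro ⟨B, j⟩ hp
      simp only [Finset.mem_sigma, Finset.mem_powerset] at hp
      simp [Finset.insert_erase hp.2]
    · rintro ⟨A, j⟩ hp
      simp only [Finset.mem_sigma, Finset.mem_powerset, Finset.mem_sdiff] at hp
      simp [Finset.card_insert_of_notMem hp.2.2]
  rw [key]
  have const1 : ∀ B ∈ (univ : Finset (Fin d)).powerset,
      (∑ _j ∈ B, w (B.card - 1) * val B) = (B.card : ℝ) * (w (B.card - 1) * val B) := by
    intro B _
    rw [Finset.sum_const, nsmul_eq_mul]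
  have const2 : ∀ A ∈ (univ : Finset (Fin d)).powerset,
      (∑ _j ∈ univ \ A, w A.card * val A) = ((d : ℝ) - A.card) * (w A.card * val A) := by
    intro A hA
    rw [Finset.sum_const, nsmul_eq_mul, Finset.card_sdiff_of_subset (Finset.subset_univ A),
      Finset.card_univ, Fintype.card_fin, Nat.cast_sub (Finset.card_le_univ A |>.trans (by simp))]
  rw [Finset.sum_congr rfl const1, Finset.sum_congr rfl const2, ← Finset.sum_sub_distrib]
  -- coefficient computation
  have coeff : ∀ B ∈ (univ : Finset (Fin d)).powerset,
      (B.card : ℝ) * (w (B.card - 1) * val B) - ((d : ℝ) - B.card) * (w B.card * val B)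
      = (if B = univ then (d : ℝ) * val univ else 0)
        + (if B = (∅ : Finset (Fin d)) then -((d : ℝ) * val ∅) else 0) := by
    intro B _
    have huniv_ne : (univ : Finset (Fin d)) ≠ ∅ := by
      have : Nonempty (Fin d) := ⟨⟨0, hd⟩⟩
      exact Finset.univ_nonempty.ne_empty
    rcases eq_or_ne B univ with rfl | hBu
    · have h1 : (univ : Finset (Fin d)).card = d := by simp
      rw [h1, if_pos rfl, if_neg huniv_ne, hw]
      simp only [Nat.choose_self, Nat.cast_one, inv_one]
      ring
    rcases eq_or_ne B (∅ : Finset (Fin d)) with rfl | hBe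
    · rw [if_neg (Ne.symm huniv_ne), if_pos rfl]
      simp [hw]
    · -- 0 < card B < d : coefficient vanishes
      rw [if_neg hBu, if_neg hBe]
      have hk0 : 0 < B.card := Finset.card_pos.mpr (Finset.nonempty_iff_ne_empty.mpr hBe)
      have hkd : B.card < d := by
        have := Finset.card_lt_card (Finset.ssubset_univ_iff.mpr hBu)
        simpa using this
      obtain ⟨m, hm⟩ : ∃ m, B.card = m + 1 := ⟨B.card - 1, by omega⟩
      rw [hm]
      have hc1 : (0:ℝ) < ((d-1).choose m : ℝ) := by
        exact_mod_cast Nat.choose_pos (by omega)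
      have hc2 : (0:ℝ) < ((d-1).choose (m+1) : ℝ) := by
        exact_mod_cast Nat.choose_pos (by omega)
      have hnat : (m+1) * (d-1).choose (m+1) = (d - (m+1)) * (d-1).choose m := by
        have h2 : d - (m+1) = d - 1 - m := by omega
        rw [h2, mul_comm, Nat.choose_succ_right_eq, mul_comm]
      have hcoef : ((m:ℝ)+1) * w m = ((d:ℝ) - ((m:ℝ)+1)) * w (m+1) := by
        have hcast : (d:ℝ) - ((m:ℝ)+1) = ((d - (m+1) : ℕ) : ℝ) := by
          rw [Nat.cast_sub (by omega)]; push_cast; ring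
        rw [hw]
        simp only []
        rw [hcast]
        field_simp
        exact_mod_cast hnat.trans (mul_comm _ _)
      push_cast
      linear_combination (val B) * hcoef
  rw [Finset.sum_congr rfl coeff, Finset.sum_add_distrib]
  rw [Finset.sum_ite_eq' _ (univ : Finset (Fin d)), Finset.sum_ite_eq' _ (∅ : Finset (Fin d))]
  simp only [Finset.mem_powerset, Finset.subset_univ, if_true, Finset.empty_subset]
  field_simp
  ring
end

section
/- Let (Ω,𝔉,ℙ) be a probability space, X₁,…,X_d real-valued random variables, and Z a real-valued random variable with E[Z²] < ∞ and Var(Z) > 0 (in the paper, Z = 1_{F_t}(X) is the indicator of a failure event). For A ⊆ {1,…,d}, let σ(X_A) be the σ-algebra generated by (X_i)_{i∈A} and define the cost function val(A) = Var(E[Z | σ(X_A)])/Var(Z) (with val(∅) = 0). Then for every j ∈ {1,…,d}, the (ℓ²)-target Shapley effect T-Sh_j = (1/d) Σ_{A ⊆ {1,…,d}∖{j}} C(d−1,|A|)⁻¹ (val(A∪{j}) − val(A)) is nonnegative. -/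
open MeasureTheory ProbabilityTheory Finset

section Aux

variable {Ω : Type*} {m m0 : MeasurableSpace Ω} {μ : Measure Ω}

lemma evariance_congr_ae {f g : Ω → ℝ} (h : f =ᵐ[μ] g) : evariance f μ = evariance g μ := by
  have hint : ∫ x, f x ∂μ = ∫ x, g x ∂μ := integral_congr_ae h
  unfold evariance
  rw [hint]
  refine lintegral_congr_ae ?_
  filter_upwards [h] with x hx
  rw [hx]

lemma variance_congr_ae {f g : Ω → ℝ} (h : f =ᵐ[μ] g) : variance f μ = variance g μ := by
  unfold variance
  rw [evariance_congr_ae h]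

/-- For `f ∈ L²`, the conditional expectation coincides a.e. with `condexpL2`. -/
lemma condexpL2_ae_eq_condexp [IsProbabilityMeasure μ] (hm : m ≤ m0) {f : Ω → ℝ}
    (hf : MemLp f 2 μ) :
    (condExpL2 ℝ ℝ hm (hf.toLp f) : Ω → ℝ) =ᵐ[μ] μ[f|m] := by
  refine ae_eq_condExp_of_forall_setIntegral_eq hm (hf.integrable one_le_two)
    (fun s _ _ => (integrable_condExpL2_of_isFiniteMeasure (E := ℝ) (𝕜 := ℝ) hm).integrableOn) (fun s hs hμs => ?_)
    (aestronglyMeasurable_condExpL2 hm _)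
  rw [integral_condExpL2_eq hm (hf.toLp f) hs hμs.ne]
  exact setIntegral_congr_ae (hm s hs) ((hf.coeFn_toLp).mono fun x hx _ => hx)

lemma memℒp_two_condexp [IsProbabilityMeasure μ] (hm : m ≤ m0) {f : Ω → ℝ}
    (hf : MemLp f 2 μ) : MemLp (μ[f|m]) 2 μ :=
  (Lp.memLp ((condExpL2 ℝ ℝ hm (hf.toLp f) : lpMeas ℝ ℝ m 2 μ) : Lp ℝ 2 μ)).ae_eq
    (condexpL2_ae_eq_condexp hm hf)

lemma integral_sq_eq_norm_toLp_sq [IsProbabilityMeasure μ] {f : Ω → ℝ} (hf : MemLp f 2 μ) :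
    ∫ x, f x ^ 2 ∂μ = ‖hf.toLp f‖ ^ 2 := by
  rw [← real_inner_self_eq_norm_sq, L2.inner_def]
  refine integral_congr_ae ?_
  filter_upwards [hf.coeFn_toLp] with x hx
  simp [hx, RCLike.inner_apply, sq]

/-- L² contraction: the variance of the conditional expectation is at most the variance. -/
lemma variance_condexp_le [IsProbabilityMeasure μ] (hm : m ≤ m0) {f : Ω → ℝ}
    (hf : MemLp f 2 μ) : variance (μ[f|m]) μ ≤ variance f μ := by
  have hg : MemLp (μ[f|m]) 2 μ := memℒp_two_condexp hm hf
  rw [variance_eq_sub hg, variance_eq_sub hf]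
  have hmean : ∫ x, (μ[f|m]) x ∂μ = ∫ x, f x ∂μ := integral_condExp hm
  have hint : μ[(μ[f|m]) ^ 2] ≤ μ[f ^ 2] := by
    have h1 : ∫ x, ((μ[f|m]) x) ^ 2 ∂μ = ‖hg.toLp _‖ ^ 2 := integral_sq_eq_norm_toLp_sq hg
    have h2 : ∫ x, (f x) ^ 2 ∂μ = ‖hf.toLp f‖ ^ 2 := integral_sq_eq_norm_toLp_sq hf
    have h3 : hg.toLp _ = ((condExpL2 ℝ ℝ hm (hf.toLp f) : lpMeas ℝ ℝ m 2 μ) : Lp ℝ 2 μ) := by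
      apply Lp.ext (f := hg.toLp _)
      exact hg.coeFn_toLp.trans ((condexpL2_ae_eq_condexp hm hf).symm)
    simp only [Pi.pow_apply] at *
    rw [h1, h2, h3]
    have := norm_condExpL2_le (𝕜 := ℝ) (E := ℝ) (μ := μ) hm (hf.toLp f)
    have hn : ‖((condExpL2 ℝ ℝ hm (hf.toLp f) : lpMeas ℝ ℝ m 2 μ) : Lp ℝ 2 μ)‖
        = ‖condExpL2 ℝ ℝ hm (hf.toLp f)‖ := rfl
    rw [hn]
    exact pow_le_pow_left₀ (norm_nonneg _) this 2
  simp only [Pi.pow_apply] at *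
  rw [hmean]
  linarith

/-- Monotonicity of the variance of conditional expectations in the σ-algebra. -/
lemma variance_condexp_mono [IsProbabilityMeasure μ] {m₁ m₂ : MeasurableSpace Ω}
    (h12 : m₁ ≤ m₂) (hm2 : m₂ ≤ m0) {f : Ω → ℝ} (hf : MemLp f 2 μ) :
    variance (μ[f|m₁]) μ ≤ variance (μ[f|m₂]) μ := by
  have hm1 : m₁ ≤ m0 := h12.trans hm2
  haveI : SigmaFinite (μ.trim hm2) := by infer_instance
  have hg : MemLp (μ[f|m₂]) 2 μ := memℒp_two_condexp hm2 hf
  have htower : μ[μ[f|m₂]|m₁] =ᵐ[μ] μ[f|m₁] := condExp_condExp_of_le h12 hm2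
  calc variance (μ[f|m₁]) μ = variance (μ[μ[f|m₂]|m₁]) μ := (variance_congr_ae htower).symm
    _ ≤ variance (μ[f|m₂]) μ := variance_condexp_le hm1 hg

end Aux

/-- Nonnegativity of the (ℓ²)-target Shapley effects: with cost function
`val A = Var(E[Z | σ(X_A)]) / Var(Z)` (where `σ(X_∅) = ⊥` so that `val ∅ = 0`), the Shapley
value of every player `j` is nonnegative. No independence assumption on the inputs is made. -/
theorem l2_target_shapley_effect_nonneg {Ω : Type*} {𝔉 : MeasurableSpace Ω} {μ : Measure Ω}
    [IsProbabilityMeasure μ] {d : ℕ} (X : Fin d → Ω → ℝ) (hX : ∀ i, Measurable (X i))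
    (Z : Ω → ℝ) (hZ : MemLp Z 2 μ) (hvar : 0 < variance Z μ) (j : Fin d) :
    0 ≤ (1 / (d : ℝ)) *
      ∑ A ∈ (Finset.univ.erase j).powerset,
        (((d - 1).choose A.card : ℝ))⁻¹ *
          ((variance (μ[Z| ⨆ i ∈ insert j A, MeasurableSpace.comap (X i) inferInstance]) μ
              / variance Z μ)
            - (variance (μ[Z| ⨆ i ∈ A, MeasurableSpace.comap (X i) inferInstance]) μ
              / variance Z μ)) := by
  apply mul_nonneg (by positivity)
  apply Finset.sum_nonneg
  intro A _
  apply mul_nonneg (by positivity)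
  rw [sub_nonneg, div_le_div_iff_of_pos_right hvar]
  refine variance_condexp_mono ?_ ?_ hZ
  · exact biSup_mono fun i hi => Finset.mem_insert_of_mem hi
  · refine iSup₂_le fun i _ => ?_
    exact (hX i).comap_le
end

section
/- Let (Ω,𝔉,ℙ) be a probability space, X₁,…,X_d real-valued random variables, and Z a real-valued integrable random variable with E[|Z − E[Z]|] > 0 (in the paper, Z = 1_{F_t}(X) is the indicator of a failure event). For A ⊆ {1,…,d}, let σ(X_A) be the σ-algebra generated by (X_i)_{i∈A} and define the cost function val(A) = E[|E[Z | σ(X_A)] − E[Z]|] / E[|Z − E[Z]|] (with val(∅) = 0). Then for every j ∈ {1,…,d}, the (ℓ¹)-target Shapley effect T-Sh_j^{ℓ¹} = (1/d) Σ_{A ⊆ {1,…,d}∖{j}} C(d−1,|A|)⁻¹ (val(A∪{j}) − val(A)) is nonnegative. -/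
open MeasureTheory ProbabilityTheory Finset

lemma aux_mono {Ω : Type*} {𝔉 : MeasurableSpace Ω} {μ : Measure Ω}
    [IsProbabilityMeasure μ] {Z : Ω → ℝ} (hZ : Integrable Z μ)
    {m₁ m₂ : MeasurableSpace Ω} (h12 : m₁ ≤ m₂) (h2 : m₂ ≤ 𝔉) :
    ∫ ω, |(μ[Z|m₁]) ω - ∫ x, Z x ∂μ| ∂μ ≤ ∫ ω, |(μ[Z|m₂]) ω - ∫ x, Z x ∂μ| ∂μ := by
  set c : ℝ := ∫ x, Z x ∂μ with hc
  set W : Ω → ℝ := fun ω => Z ω - c with hW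
  have hWint : Integrable W μ := hZ.sub (integrable_const c)
  have hsub : ∀ (m : MeasurableSpace Ω), m ≤ 𝔉 →
      μ[W|m] =ᵐ[μ] fun ω => (μ[Z|m]) ω - c := by
    intro m hm
    have h1 : μ[W|m] =ᵐ[μ] μ[Z|m] - μ[fun _ => c|m] :=
      condExp_sub hZ (integrable_const c) m
    have h2' : μ[(fun _ => c : Ω → ℝ)|m] = fun _ => c := condExp_const hm c
    filter_upwards [h1] with ω hω
    simp [hω, h2']
  have h1 := hsub m₁ (h12.trans h2)
  have h2' := hsub m₂ h2
  have htower : μ[μ[W|m₂]|m₁] =ᵐ[μ] μ[W|m₁] := condExp_condExp_of_le h12 h2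
  calc ∫ ω, |(μ[Z|m₁]) ω - c| ∂μ
      = ∫ ω, |(μ[μ[W|m₂]|m₁]) ω| ∂μ := by
        refine integral_congr_ae ?_
        filter_upwards [h1, htower] with ω hω hω2
        rw [hω2, hω]
    _ ≤ ∫ ω, |(μ[W|m₂]) ω| ∂μ := integral_abs_condExp_le _
    _ = ∫ ω, |(μ[Z|m₂]) ω - c| ∂μ := by
        refine integral_congr_ae ?_
        filter_upwards [h2'] with ω hω
        rw [hω]

/-- Nonnegativity of the (ℓ¹)-target Shapley effects: with cost function
`val A = E[|E[Z | σ(X_A)] − E[Z]|] / E[|Z − E[Z]|]` (where `σ(X_∅) = ⊥` so that `val ∅ = 0`),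
the Shapley value of every player `j` is nonnegative. No independence assumption on the inputs
is made. -/
theorem l1_target_shapley_effect_nonneg {Ω : Type*} {𝔉 : MeasurableSpace Ω} {μ : Measure Ω}
    [IsProbabilityMeasure μ] {d : ℕ} (X : Fin d → Ω → ℝ) (hX : ∀ i, Measurable (X i))
    (Z : Ω → ℝ) (hZ : Integrable Z μ)
    (hmad : 0 < ∫ ω, |Z ω - ∫ x, Z x ∂μ| ∂μ) (j : Fin d) :
    0 ≤ (1 / (d : ℝ)) *
      ∑ A ∈ (Finset.univ.erase j).powerset,
        (((d - 1).choose A.card : ℝ))⁻¹ *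
          (((∫ ω, |(μ[Z| ⨆ i ∈ insert j A, MeasurableSpace.comap (X i) inferInstance]) ω
                - ∫ x, Z x ∂μ| ∂μ) / ∫ ω, |Z ω - ∫ x, Z x ∂μ| ∂μ)
            - ((∫ ω, |(μ[Z| ⨆ i ∈ A, MeasurableSpace.comap (X i) inferInstance]) ω
                - ∫ x, Z x ∂μ| ∂μ) / ∫ ω, |Z ω - ∫ x, Z x ∂μ| ∂μ)) := by
  apply mul_nonneg (by positivity)
  apply Finset.sum_nonneg
  intro A hA
  apply mul_nonneg (by positivity)
  rw [sub_nonneg, div_le_div_iff_of_pos_right hmad]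
  have hle : ∀ (B : Finset (Fin d)),
      (⨆ i ∈ B, MeasurableSpace.comap (X i) inferInstance) ≤ 𝔉 := by
    intro B
    apply iSup_le; intro i; apply iSup_le; intro _
    exact (hX i).comap_le
  apply aux_mono hZ _ (hle (insert j A))
  exact iSup_le fun i => iSup_le fun hi =>
    le_iSup₂ (f := fun i (_ : i ∈ insert j A) => MeasurableSpace.comap (X i) inferInstance)
      i (Finset.mem_insert_of_mem hi)
end

section
/- Let (Ω,𝔉,ℙ) be a probability space, X₁,…,X_d mutually independent real-valued random variables, and G a measurable function with E[G(X)²] < ∞ where X = (X₁,…,X_d). For A ⊆ {1,…,d}, define the Hoeffding component G_A = Σ_{B ⊆ A} (−1)^{|A|−|B|} E[G(X) | X_B], where E[G(X)|X_B] denotes conditional expectation given the σ-algebra generated by (X_i)_{i∈B} (with E[G(X)|X_∅] = E[G(X)]). Then for any two distinct subsets A ≠ B of {1,…,d}, the components are orthogonal in L²: E[G_A · G_B] = 0. -/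
open MeasureTheory ProbabilityTheory Finset
open scoped ENNReal

/-- The conditional expectation of an `L²` function is `L²`. -/
lemma memℒp_two_condexp_aux {Ω : Type*} {m 𝔉 : MeasurableSpace Ω} {μ : Measure Ω}
    [IsProbabilityMeasure μ] (hm : m ≤ 𝔉)
    {f : Ω → ℝ} (hf : MemLp f 2 μ) : MemLp (μ[f|m]) 2 μ := by
  set F : Lp ℝ 2 μ := hf.toLp f with hF
  have hFf : (F : Ω → ℝ) =ᵐ[μ] f := hf.coeFn_toLp
  have heq : (condExpL2 ℝ ℝ hm F : Ω → ℝ) =ᵐ[μ] μ[f|m] := by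
    refine ae_eq_condExp_of_forall_setIntegral_eq hm (hf.integrable one_le_two) ?_ ?_ ?_
    · exact fun s _ _ =>
        (integrable_condExpL2_of_isFiniteMeasure (𝕜 := ℝ) hm (f := F)).integrableOn
    · intro s hs hμs
      rw [integral_condExpL2_eq (𝕜 := ℝ) hm F hs hμs.ne]
      exact setIntegral_congr_ae (hm s hs) (hFf.mono fun x hx _ => hx)
    · exact aestronglyMeasurable_condExpL2 hm F
  have hmem : MemLp (condExpL2 ℝ ℝ hm F : Ω → ℝ) 2 μ := by
    exact Lp.memLp _
  exact hmem.ae_eq heq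

/-- If `f` is `m₁`-measurable and `m₁` is independent of `m₃`, then conditioning on `m₂ ⊔ m₃`
(where `m₂ ≤ m₁`) is the same as conditioning on `m₂`. -/
lemma condexp_sup_indep_aux {Ω : Type*} {m₁ m₂ m₃ 𝔉 : MeasurableSpace Ω} {μ : Measure Ω}
    [IsProbabilityMeasure μ]
    (h₁ : m₁ ≤ 𝔉) (h₂ : m₂ ≤ 𝔉) (h₃ : m₃ ≤ 𝔉) (h₂₁ : m₂ ≤ m₁)
    (hindep : Indep m₁ m₃ μ) {f : Ω → ℝ} (hf : Integrable f μ)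
    (hfm : StronglyMeasurable[m₁] f) :
    μ[f | m₂ ⊔ m₃] =ᵐ[μ] μ[f | m₂] := by
  have h₂₃ : m₂ ⊔ m₃ ≤ 𝔉 := sup_le h₂ h₃
  -- product formula on rectangles
  have hprod : ∀ (g : Ω → ℝ), Integrable g μ → StronglyMeasurable[m₁] g →
      ∀ s₂ s₃, MeasurableSet[m₂] s₂ → MeasurableSet[m₃] s₃ →
      ∫ x in s₂ ∩ s₃, g x ∂μ = (∫ x in s₂, g x ∂μ) * (μ s₃).toReal := by
    intro g hg hgm s₂ s₃ hs₂ hs₃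
    have hs₂₁ : MeasurableSet[m₁] s₂ := h₂₁ _ hs₂
    set F : Ω → ℝ := s₂.indicator g with hFdef
    set G : Ω → ℝ := s₃.indicator (fun _ => (1:ℝ)) with hGdef
    have hFm : StronglyMeasurable[m₁] F := hgm.indicator hs₂₁
    have hGm : StronglyMeasurable[m₃] G :=
      (@stronglyMeasurable_const Ω ℝ m₃ _ _).indicator hs₃
    have hFG : IndepFun F G μ := by
      have : Indep (MeasurableSpace.comap F inferInstance)
          (MeasurableSpace.comap G inferInstance) μ :=
        indep_of_indep_of_le_left (indep_of_indep_of_le_right hindep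
          hGm.measurable.comap_le) hFm.measurable.comap_le
      exact this
    have key : ∫ x, F x * G x ∂μ = (∫ x, F x ∂μ) * ∫ x, G x ∂μ :=
      hFG.integral_mul_eq_mul_integral ((hFm.mono h₁).aestronglyMeasurable)
        ((hGm.mono h₃).aestronglyMeasurable)
    have heq : ∀ x, (s₂ ∩ s₃).indicator g x = F x * G x := by
      intro x
      by_cases hx₂ : x ∈ s₂ <;> by_cases hx₃ : x ∈ s₃ <;>
        simp [hFdef, hGdef, Set.indicator_apply, hx₂, hx₃, Set.mem_inter_iff]
    rw [← integral_indicator ((h₂ _ hs₂).inter (h₃ _ hs₃))]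
    calc ∫ x, (s₂ ∩ s₃).indicator g x ∂μ = ∫ x, F x * G x ∂μ :=
          integral_congr_ae (Filter.Eventually.of_forall heq)
      _ = (∫ x, F x ∂μ) * ∫ x, G x ∂μ := key
      _ = (∫ x in s₂, g x ∂μ) * (μ s₃).toReal := by
          rw [hFdef, hGdef, integral_indicator (h₂ _ hs₂)]
          congr 1
          rw [integral_indicator (h₃ _ hs₃)]
          simp [integral_const, measureReal_def]
  -- the set-integral characterization on all of m₂ ⊔ m₃
  have hsets : ∀ s, MeasurableSet[m₂ ⊔ m₃] s →
      ∫ x in s, (μ[f|m₂]) x ∂μ = ∫ x in s, f x ∂μ := by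
    set P : Set (Set Ω) :=
      {s | ∃ s₂, MeasurableSet[m₂] s₂ ∧ ∃ s₃, MeasurableSet[m₃] s₃ ∧ s = s₂ ∩ s₃} with hP
    have hgen : m₂ ⊔ m₃ = MeasurableSpace.generateFrom P := by
      refine le_antisymm (sup_le ?_ ?_) (MeasurableSpace.generateFrom_le ?_)
      · exact fun s hs => MeasurableSpace.measurableSet_generateFrom
          ⟨s, hs, Set.univ, MeasurableSet.univ, (Set.inter_univ s).symm⟩
      · exact fun s hs => MeasurableSpace.measurableSet_generateFrom
          ⟨Set.univ, MeasurableSet.univ, s, hs, (Set.univ_inter s).symm⟩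
      · rintro t ⟨s₂, hs₂, s₃, hs₃, rfl⟩
        exact ((le_sup_left : m₂ ≤ m₂ ⊔ m₃) _ hs₂).inter
          ((le_sup_right : m₃ ≤ m₂ ⊔ m₃) _ hs₃)
    have hpi : IsPiSystem P := by
      rintro _ ⟨s₂, hs₂, s₃, hs₃, rfl⟩ _ ⟨t₂, ht₂, t₃, ht₃, rfl⟩ _
      exact ⟨s₂ ∩ t₂, hs₂.inter ht₂, s₃ ∩ t₃, hs₃.inter ht₃,
        Set.inter_inter_inter_comm s₂ s₃ t₂ t₃⟩
    intro s hs
    refine MeasurableSpace.induction_on_inter (m := m₂ ⊔ m₃)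
      (C := fun s _ => ∫ x in s, (μ[f|m₂]) x ∂μ = ∫ x in s, f x ∂μ) (s := P)
      hgen hpi ?_ ?_ ?_ ?_ s hs
    · simp
    · rintro t ⟨s₂, hs₂, s₃, hs₃, rfl⟩
      rw [hprod f hf hfm s₂ s₃ hs₂ hs₃,
        hprod (μ[f|m₂]) integrable_condExp (stronglyMeasurable_condExp.mono h₂₁) s₂ s₃ hs₂ hs₃,
        setIntegral_condExp h₂ hf hs₂]
    · intro t htm ht
      have ht𝔉 : MeasurableSet t := h₂₃ _ htm
      have e1 : (∫ x in t, (μ[f|m₂]) x ∂μ) + ∫ x in tᶜ, (μ[f|m₂]) x ∂μ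
          = ∫ x, (μ[f|m₂]) x ∂μ := integral_add_compl ht𝔉 integrable_condExp
      have e2 : (∫ x in t, f x ∂μ) + ∫ x in tᶜ, f x ∂μ = ∫ x, f x ∂μ :=
        integral_add_compl ht𝔉 hf
      have e3 : ∫ x, (μ[f|m₂]) x ∂μ = ∫ x, f x ∂μ := integral_condExp h₂
      linarith
    · intro g hdisj hmeas hC
      rw [integral_iUnion (fun n => h₂₃ _ (hmeas n)) hdisj
          integrable_condExp.integrableOn,
        integral_iUnion (fun n => h₂₃ _ (hmeas n)) hdisj hf.integrableOn]
      exact tsum_congr hC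
  refine (ae_eq_condExp_of_forall_setIntegral_eq h₂₃ hf
    (fun s _ _ => integrable_condExp.integrableOn)
    (fun s hs _ => hsets s hs) ?_).symm
  exact ((stronglyMeasurable_condExp (m := m₂) (f := f) (μ := μ)).mono
    (le_sup_left : m₂ ≤ m₂ ⊔ m₃)).aestronglyMeasurable

lemma alternating_sum_powerset_eq_zero {α : Type*} [DecidableEq α] {A : Finset α} {j : α}
    (hj : j ∈ A) (w : Finset α → ℝ) (hw : ∀ C, w (insert j C) = w C) :
    ∑ C ∈ A.powerset, (-1 : ℝ) ^ (A.card - C.card) * w C = 0 := by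
  obtain ⟨A', hjA', rfl⟩ : ∃ A', j ∉ A' ∧ insert j A' = A :=
    ⟨A.erase j, A.notMem_erase j, Finset.insert_erase hj⟩
  rw [Finset.sum_powerset_insert hjA', ← Finset.sum_add_distrib]
  refine Finset.sum_eq_zero fun C hC => ?_
  have hCA : C ⊆ A' := Finset.mem_powerset.mp hC
  have hjC : j ∉ C := fun h => hjA' (hCA h)
  have hcard : (insert j A').card = A'.card + 1 := Finset.card_insert_of_notMem hjA'
  have hcard' : (insert j C).card = C.card + 1 := Finset.card_insert_of_notMem hjC
  have hle : C.card ≤ A'.card := Finset.card_le_card hCA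
  rw [hcard, hcard', hw C, Nat.succ_sub hle, Nat.succ_sub_succ, pow_succ]
  ring

lemma integral_hoeffding_double_sum {Ω : Type*} {𝔉 : MeasurableSpace Ω} {μ : Measure Ω}
    [IsProbabilityMeasure μ] {ι : Type*} [DecidableEq ι]
    (h : Finset ι → Ω → ℝ)
    (hint : ∀ C D, Integrable (fun ω => h C ω * h D ω) μ)
    (hkey : ∀ C D, ∫ ω, h C ω * h D ω ∂μ = ∫ ω, h (C ∩ D) ω * h D ω ∂μ)
    (A B : Finset ι) (hAB : A ≠ B) :
    ∫ ω, (∑ C ∈ A.powerset, (-1 : ℝ) ^ (A.card - C.card) * h C ω) *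
         (∑ C ∈ B.powerset, (-1 : ℝ) ^ (B.card - C.card) * h C ω) ∂μ = 0 := by
  classical
  set T : Finset ι → Finset ι → ℝ := fun C D => ∫ ω, h C ω * h D ω ∂μ with hT
  have Tsymm : ∀ C D, T C D = T D C := fun C D =>
    integral_congr_ae (Filter.Eventually.of_forall fun ω => mul_comm _ _)
  have expand : (∫ ω, (∑ C ∈ A.powerset, (-1 : ℝ) ^ (A.card - C.card) * h C ω) *
         (∑ C ∈ B.powerset, (-1 : ℝ) ^ (B.card - C.card) * h C ω) ∂μ)
      = ∑ C ∈ A.powerset, ∑ D ∈ B.powerset,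
          ((-1 : ℝ) ^ (A.card - C.card) * (-1 : ℝ) ^ (B.card - D.card)) * T C D := by
    have hptw : ∀ ω, (∑ C ∈ A.powerset, (-1 : ℝ) ^ (A.card - C.card) * h C ω) *
        (∑ D ∈ B.powerset, (-1 : ℝ) ^ (B.card - D.card) * h D ω)
        = ∑ C ∈ A.powerset, ∑ D ∈ B.powerset,
          ((-1 : ℝ) ^ (A.card - C.card) * (-1 : ℝ) ^ (B.card - D.card)) * (h C ω * h D ω) := by
      intro ω
      rw [Finset.sum_mul_sum]
      exact Finset.sum_congr rfl fun C _ => Finset.sum_congr rfl fun D _ => by ring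
    rw [integral_congr_ae (Filter.Eventually.of_forall hptw),
      integral_finset_sum _ fun C _ => integrable_finset_sum _ fun D _ => (hint C D).const_mul _]
    refine Finset.sum_congr rfl fun C _ => ?_
    rw [integral_finset_sum _ fun D _ => (hint C D).const_mul _]
    exact Finset.sum_congr rfl fun D _ => integral_const_mul _ _
  rw [expand]
  have hcase : ¬A ⊆ B ∨ ¬B ⊆ A := by
    by_contra hc
    push_neg at hc
    exact hAB (Finset.Subset.antisymm hc.1 hc.2)
  rcases hcase with hAB' | hAB'
  · obtain ⟨j, hjA, hjB⟩ := Finset.not_subset.mp hAB'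
    rw [Finset.sum_comm]
    refine Finset.sum_eq_zero fun D hD => ?_
    have hjD : j ∉ D := fun hjd => hjB (Finset.mem_powerset.mp hD hjd)
    have hw : ∀ C, T (insert j C) D = T C D := by
      intro C
      show (∫ ω, h (insert j C) ω * h D ω ∂μ) = ∫ ω, h C ω * h D ω ∂μ
      rw [hkey (insert j C) D, Finset.insert_inter_of_notMem hjD, ← hkey]
    calc ∑ C ∈ A.powerset,
          ((-1 : ℝ) ^ (A.card - C.card) * (-1 : ℝ) ^ (B.card - D.card)) * T C D
        = (-1 : ℝ) ^ (B.card - D.card) *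
            ∑ C ∈ A.powerset, (-1 : ℝ) ^ (A.card - C.card) * T C D := by
          rw [Finset.mul_sum]
          exact Finset.sum_congr rfl fun C _ => by ring
      _ = 0 := by
          rw [alternating_sum_powerset_eq_zero hjA (fun C => T C D) hw, mul_zero]
  · obtain ⟨j, hjB, hjA⟩ := Finset.not_subset.mp hAB'
    refine Finset.sum_eq_zero fun C hC => ?_
    have hjC : j ∉ C := fun hjc => hjA (Finset.mem_powerset.mp hC hjc)
    have hw : ∀ D, T C (insert j D) = T C D := by
      intro D
      rw [Tsymm C (insert j D), Tsymm C D]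
      show (∫ ω, h (insert j D) ω * h C ω ∂μ) = ∫ ω, h D ω * h C ω ∂μ
      rw [hkey (insert j D) C, Finset.insert_inter_of_notMem hjC, ← hkey D C]
    calc ∑ D ∈ B.powerset,
          ((-1 : ℝ) ^ (A.card - C.card) * (-1 : ℝ) ^ (B.card - D.card)) * T C D
        = (-1 : ℝ) ^ (A.card - C.card) *
            ∑ D ∈ B.powerset, (-1 : ℝ) ^ (B.card - D.card) * T C D := by
          rw [Finset.mul_sum]
          exact Finset.sum_congr rfl fun D _ => by ring
      _ = 0 := by
          rw [alternating_sum_powerset_eq_zero hjB (fun D => T C D) hw, mul_zero]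

/-- Orthogonality of the Hoeffding components under mutually independent inputs: for distinct
subsets `A ≠ B` of `{1,…,d}`, the components
`G_A = Σ_{C ⊆ A} (−1)^{|A|−|C|} E[G(X) | σ(X_C)]` satisfy `E[G_A · G_B] = 0`. -/
theorem hoeffding_components_orthogonal {Ω : Type*} {𝔉 : MeasurableSpace Ω} {μ : Measure Ω}
    [IsProbabilityMeasure μ] {d : ℕ} (X : Fin d → Ω → ℝ) (hX : ∀ i, Measurable (X i))
    (hindep : iIndepFun X μ)
    (G : (Fin d → ℝ) → ℝ) (hGm : Measurable G)
    (hG : MemLp (fun ω => G (fun i => X i ω)) 2 μ)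
    (A B : Finset (Fin d)) (hAB : A ≠ B) :
    ∫ ω,
        (∑ C ∈ A.powerset, (-1 : ℝ) ^ (A.card - C.card) *
          (μ[(fun ω' => G (fun i => X i ω'))|
              ⨆ i ∈ C, MeasurableSpace.comap (X i) inferInstance]) ω)
      * (∑ C ∈ B.powerset, (-1 : ℝ) ^ (B.card - C.card) *
          (μ[(fun ω' => G (fun i => X i ω'))|
              ⨆ i ∈ C, MeasurableSpace.comap (X i) inferInstance]) ω) ∂μ = 0 := by
  classical
  set Y : Ω → ℝ := fun ω' => G (fun i => X i ω') with hYdef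
  set mS : Finset (Fin d) → MeasurableSpace Ω :=
    fun C => ⨆ i ∈ C, MeasurableSpace.comap (X i) inferInstance with hmSdef
  have h_le : ∀ C, mS C ≤ 𝔉 := fun C =>
    iSup_le fun i => iSup_le fun _ => (hX i).comap_le
  have hmono : ∀ {C D : Finset (Fin d)}, C ⊆ D → mS C ≤ mS D := fun {C D} hCD =>
    biSup_mono fun i hi => hCD hi
  have h_indep : ∀ {C D : Finset (Fin d)}, Disjoint C D → Indep (mS C) (mS D) μ := by
    intro C D hCD
    have := indep_iSup_of_disjoint (fun i => (hX i).comap_le) hindep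
      ((Finset.disjoint_coe).mpr hCD)
    exact this
  set h : Finset (Fin d) → Ω → ℝ := fun C => μ[Y | mS C] with hhdef
  have hh2 : ∀ C, MemLp (h C) 2 μ := fun C => memℒp_two_condexp_aux (h_le C) hG
  have hint : ∀ C D, Integrable (fun ω => h C ω * h D ω) μ := by
    intro C D
    have h121 : (1 : ℝ≥0∞) / 1 = 1 / 2 + 1 / 2 := by
      rw [div_one]
      exact (ENNReal.add_halves 1).symm
    exact memLp_one_iff_integrable.mp ((hh2 D).smul (hh2 C) (r := 1))
  have hkey : ∀ C D, ∫ ω, h C ω * h D ω ∂μ = ∫ ω, h (C ∩ D) ω * h D ω ∂μ := by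
    intro C D
    have hsup : mS (C ∩ D) ⊔ mS (D \ C) = mS D := by
      refine le_antisymm
        (sup_le (hmono Finset.inter_subset_right) (hmono Finset.sdiff_subset)) ?_
      refine iSup_le fun i => iSup_le fun hi => ?_
      by_cases hiC : i ∈ C
      · exact le_trans (le_iSup₂ (f := fun (i : Fin d) (_ : i ∈ C ∩ D) =>
          MeasurableSpace.comap (X i) inferInstance) i
          (Finset.mem_inter.mpr ⟨hiC, hi⟩)) le_sup_left
      · exact le_trans (le_iSup₂ (f := fun (i : Fin d) (_ : i ∈ D \ C) =>
          MeasurableSpace.comap (X i) inferInstance) i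
          (Finset.mem_sdiff.mpr ⟨hi, hiC⟩)) le_sup_right
    have hcond : μ[h C | mS D] =ᵐ[μ] h (C ∩ D) := by
      have h1 : μ[h C | mS (C ∩ D) ⊔ mS (D \ C)] =ᵐ[μ] μ[h C | mS (C ∩ D)] :=
        condexp_sup_indep_aux (h_le C) (h_le (C ∩ D)) (h_le (D \ C))
          (hmono Finset.inter_subset_left) (h_indep Finset.disjoint_sdiff)
          integrable_condExp stronglyMeasurable_condExp
      have h2 : μ[μ[Y | mS C] | mS (C ∩ D)] =ᵐ[μ] μ[Y | mS (C ∩ D)] :=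
        condExp_condExp_of_le (hmono Finset.inter_subset_left) (h_le C)
      rw [← hsup]
      exact h1.trans h2
    have e1 : ∫ ω, h C ω * h D ω ∂μ
        = ∫ ω, (μ[fun ω' => h D ω' * h C ω' | mS D]) ω ∂μ := by
      rw [integral_condExp (h_le D)]
      exact integral_congr_ae (Filter.Eventually.of_forall fun ω => mul_comm _ _)
    have e2 : μ[fun ω' => h D ω' * h C ω' | mS D] =ᵐ[μ]
        fun ω => h D ω * (μ[h C | mS D]) ω :=
      condExp_mul_of_stronglyMeasurable_left stronglyMeasurable_condExp (hint D C) integrable_condExp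
    have e3 : (fun ω => h D ω * (μ[h C | mS D]) ω) =ᵐ[μ]
        fun ω => h (C ∩ D) ω * h D ω :=
      hcond.mono fun ω hω => by dsimp only; rw [hω, mul_comm]
    rw [e1]
    exact integral_congr_ae (e2.trans e3)
  exact integral_hoeffding_double_sum h hint hkey A B hAB
end
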